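/- For nonnegative integers m1, m2, m1', m2', the set of integer lattice points of FFLV_4(m1+m1', m2+m2') equals the Minkowski sum of the sets of integer lattice points of FFLV_4(m1,m2) and FFLV_4(m1',m2'). -/

import Mathlib

open Pointwise

/-- Lattice points of the FFLV polytope for `sp_4`,
with coordinates `(s11, s12̄, s22̄, s11̄)`. -/
def FFLV4Z (m1 m2 : ℕ) : Set (Fin 4 → ℤ) :=
  {s | (∀ i, 0 ≤ s i) ∧ s 0 ≤ (m1 : ℤ) ∧ s 2 ≤ (m2 : ℤ) ∧
    s 0 + s 1 + s 3 ≤ (m1 : ℤ) + m2 ∧ s 0 + s 1 + s 2 ≤ (m1 : ℤ) + m2}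

lemma fflv_add_mem {a b c d : ℕ} {s t : Fin 4 → ℤ} (hs : s ∈ FFLV4Z a b)
    (ht : t ∈ FFLV4Z c d) : s + t ∈ FFLV4Z (a + c) (b + d) := by
  obtain ⟨h0, h1, h2, h3, h4⟩ := hs
  obtain ⟨g0, g1, g2, g3, g4⟩ := ht
  refine ⟨fun i => ?_, ?_, ?_, ?_, ?_⟩ <;> simp only [Pi.add_apply] <;> push_cast
  · have := h0 i; have := g0 i; linarith
  all_goals linarith

lemma mem_add_of_sub {A B : Set (Fin 4 → ℤ)} {s t : Fin 4 → ℤ}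
    (h1 : s - t ∈ A) (h2 : t ∈ B) : s ∈ A + B := by
  have := Set.add_mem_add h1 h2
  simpa using this

lemma fflv_sub_mem {a b : ℕ} {s t : Fin 4 → ℤ}
    (h0 : ∀ i, 0 ≤ s i - t i) (h1 : s 0 - t 0 ≤ (a : ℤ)) (h2 : s 2 - t 2 ≤ (b : ℤ))
    (h3 : s 0 + s 1 + s 3 - (t 0 + t 1 + t 3) ≤ (a : ℤ) + b)
    (h4 : s 0 + s 1 + s 2 - (t 0 + t 1 + t 2) ≤ (a : ℤ) + b) :
    s - t ∈ FFLV4Z a b := by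
  refine ⟨fun i => by simpa using h0 i, ?_, ?_, ?_, ?_⟩ <;>
    simp only [Pi.sub_apply] <;> linarith

lemma step1 (a b : ℕ) : FFLV4Z (a + 1) b ⊆ FFLV4Z a b + FFLV4Z 1 0 := by
  intro s hs
  obtain ⟨h0, h1, h2, h3, h4⟩ := hs
  have n0 := h0 0; have n1 := h0 1; have n2 := h0 2; have n3 := h0 3
  push_cast at h1 h3 h4
  by_cases c0 : (a : ℤ) < s 0
  · refine mem_add_of_sub (t := ![1,0,0,0]) ?_ ?_
    · refine fflv_sub_mem (fun i => ?_) (by simp; omega) (by simp; omega)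
        (by simp; omega) (by simp; omega)
      fin_cases i <;> simp <;> omega
    · exact ⟨fun i => by fin_cases i <;> norm_num, by norm_num, by decide,
        by decide, by decide⟩
  · by_cases c1 : (a : ℤ) + b < s 0 + s 1 + s 3 ∨ (a : ℤ) + b < s 0 + s 1 + s 2
    · by_cases c2 : 1 ≤ s 1
      · refine mem_add_of_sub (t := ![0,1,0,0]) ?_ ?_
        · refine fflv_sub_mem (fun i => ?_) (by simp; omega) (by simp; omega)
            (by simp; omega) (by simp; omega)
          fin_cases i <;> simp <;> omega
        · exact ⟨fun i => by fin_cases i <;> norm_num, by norm_num, by decide,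
            by decide, by decide⟩
      · -- s 1 = 0; second sum can't exceed, so first sum is tight and s 3 ≥ 1
        refine mem_add_of_sub (t := ![0,0,0,1]) ?_ ?_
        · refine fflv_sub_mem (fun i => ?_) (by simp; omega) (by simp; omega)
            (by simp; omega) (by simp; omega)
          fin_cases i <;> simp <;> omega
        · exact ⟨fun i => by fin_cases i <;> norm_num, by norm_num, by decide,
            by decide, by decide⟩
    · push_neg at c1
      refine mem_add_of_sub (t := 0) ?_ ?_
      · refine fflv_sub_mem (fun i => by simpa using h0 i) (by simp; omega)
          (by simp; omega) (by simp; omega) (by simp; omega)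
      · exact ⟨fun i => le_refl 0, by positivity, by positivity, by positivity, by positivity⟩

lemma step2 (a b : ℕ) : FFLV4Z a (b + 1) ⊆ FFLV4Z a b + FFLV4Z 0 1 := by
  intro s hs
  obtain ⟨h0, h1, h2, h3, h4⟩ := hs
  have n0 := h0 0; have n1 := h0 1; have n2 := h0 2; have n3 := h0 3
  push_cast at h2 h3 h4
  by_cases c0 : (b : ℤ) < s 2
  · -- s 2 = b + 1 ⇒ s 0 + s 1 ≤ a
    by_cases c1 : (a : ℤ) + b < s 0 + s 1 + s 3
    · -- also s 3 ≥ 1: subtract e2 + e3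
      refine mem_add_of_sub (t := ![0,0,1,1]) ?_ ?_
      · refine fflv_sub_mem (fun i => ?_) (by simp; omega) (by simp; omega)
          (by simp; omega) (by simp; omega)
        fin_cases i <;> simp <;> omega
      · exact ⟨fun i => by fin_cases i <;> norm_num, by norm_num, by decide,
          by decide, by decide⟩
    · refine mem_add_of_sub (t := ![0,0,1,0]) ?_ ?_
      · refine fflv_sub_mem (fun i => ?_) (by simp; omega) (by simp; omega)
          (by simp; omega) (by simp; omega)
        fin_cases i <;> simp <;> omega
      · exact ⟨fun i => by fin_cases i <;> norm_num, by norm_num, by decide,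
          by decide, by decide⟩
  · by_cases c1 : (a : ℤ) + b < s 0 + s 1 + s 3 ∨ (a : ℤ) + b < s 0 + s 1 + s 2
    · by_cases c2 : 1 ≤ s 1
      · refine mem_add_of_sub (t := ![0,1,0,0]) ?_ ?_
        · refine fflv_sub_mem (fun i => ?_) (by simp; omega) (by simp; omega)
            (by simp; omega) (by simp; omega)
          fin_cases i <;> simp <;> omega
        · exact ⟨fun i => by fin_cases i <;> norm_num, by norm_num, by decide,
            by decide, by decide⟩
      · refine mem_add_of_sub (t := ![0,0,0,1]) ?_ ?_
        · refine fflv_sub_mem (fun i => ?_) (by simp; omega) (by simp; omega)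
            (by simp; omega) (by simp; omega)
          fin_cases i <;> simp <;> omega
        · exact ⟨fun i => by fin_cases i <;> norm_num, by norm_num, by decide,
            by decide, by decide⟩
    · push_neg at c1
      refine mem_add_of_sub (t := 0) ?_ ?_
      · refine fflv_sub_mem (fun i => by simpa using h0 i) (by simp; omega)
          (by simp; omega) (by simp; omega) (by simp; omega)
      · exact ⟨fun i => le_refl 0, by positivity, by positivity, by positivity, by positivity⟩

lemma fflv_zero : FFLV4Z 0 0 = 0 := by
  ext s
  simp only [Set.mem_zero, FFLV4Z, Set.mem_setOf_eq]
  constructor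
  · rintro ⟨h0, h1, h2, h3, h4⟩
    funext i
    have := h0 0; have := h0 1; have := h0 2; have := h0 3
    fin_cases i <;> simp <;> omega
  · rintro rfl
    refine ⟨fun i => le_refl 0, by simp, by simp, by simp, by simp⟩

lemma eq1 (a b : ℕ) : FFLV4Z (a + 1) b = FFLV4Z a b + FFLV4Z 1 0 := by
  refine le_antisymm (step1 a b) ?_
  rintro s ⟨x, hx, y, hy, rfl⟩
  have := fflv_add_mem hx hy
  simpa using this

lemma eq2 (a b : ℕ) : FFLV4Z a (b + 1) = FFLV4Z a b + FFLV4Z 0 1 := by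
  refine le_antisymm (step2 a b) ?_
  rintro s ⟨x, hx, y, hy, rfl⟩
  have := fflv_add_mem hx hy
  simpa using this

theorem stmt_1 (m1 m2 m1' m2' : ℕ) :
    FFLV4Z (m1 + m1') (m2 + m2') = FFLV4Z m1 m2 + FFLV4Z m1' m2' := by
  induction m1' with
  | zero =>
    induction m2' with
    | zero => simp [fflv_zero]
    | succ k ih =>
      have : m2 + (k + 1) = (m2 + k) + 1 := by omega
      rw [this, eq2, ih, add_assoc, ← eq2]
  | succ k ih =>
    have : m1 + (k + 1) = (m1 + k) + 1 := by omega
    rw [this, eq1 (m1 + k) (m2 + m2'), ih, add_assoc]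
    congr 1
    rw [eq1 k m2']
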